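/- arXiv:1404.5665 — 3 statements merged into one kernel-verified Lean document; each statement's English description precedes it below -/
import Mathlib

section
/- (Nelson-Oppen with propositional structure) Let T1 and T2 be stably-infinite theories over disjoint signatures Σ1, Σ2, and let Φi be a quantifier-free Σi-formula for i=1,2. Then Φ1 ∧ Φ2 is (T1 ∪ T2)-satisfiable if and only if there exists an equivalence relation E on the set V of variables shared by Φ1 and Φ2 such that {Φi} ∪ α(V,E) is Ti-satisfiable for i=1,2. -/
open FirstOrder

namespace NelsonOppen

/-- `T`-satisfiability of a set `Γ` of formulas with free variables in `ℕ`: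
there is a model of `T` and a valuation of the variables realizing every
formula of `Γ`. -/
def TSat (L : Language) (T : L.Theory) (Γ : Set (L.Formula ℕ)) : Prop :=
  ∃ (M : Type) (S : L.Structure M) (v : ℕ → M),
    (∀ ψ ∈ T, @FirstOrder.Language.Sentence.Realize L M S ψ) ∧
    (∀ φ ∈ Γ, @FirstOrder.Language.Formula.Realize L M S ℕ φ v)

/-- A theory is stably infinite if every `T`-satisfiable quantifier-free
formula is realized in an infinite model of `T`. -/
def StablyInfinite (L : Language) (T : L.Theory) : Prop :=
  ∀ φ : L.Formula ℕ, φ.IsQF → TSat L T {φ} →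
    ∃ (M : Type) (S : L.Structure M) (v : ℕ → M),
      Infinite M ∧ (∀ ψ ∈ T, @FirstOrder.Language.Sentence.Realize L M S ψ) ∧
      @FirstOrder.Language.Formula.Realize L M S ℕ φ v

/-- The arrangement `α(V, E)` induced by a binary relation `E` on the
variables in `V`: all equalities `x = y` for `x E y` and all disequalities
`x ≠ y` for `x, y ∈ V` not related by `E`. -/
def arrangement (L : Language) (V : Set ℕ) (E : ℕ → ℕ → Prop) :
    Set (L.Formula ℕ) :=
  {φ | ∃ x ∈ V, ∃ y ∈ V,
    (E x y ∧ φ = FirstOrder.Language.Term.equal (L := L) (.var x) (.var y)) ∨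
    (¬ E x y ∧
      φ = (FirstOrder.Language.Term.equal (L := L) (.var x) (.var y)).not)}

/-- `E` is an equivalence relation on the set `V`. -/
def IsEquivOn (V : Set ℕ) (E : ℕ → ℕ → Prop) : Prop :=
  (∀ x ∈ V, E x x) ∧ (∀ x ∈ V, ∀ y ∈ V, E x y → E y x) ∧
  (∀ x ∈ V, ∀ y ∈ V, ∀ z ∈ V, E x y → E y z → E x z)

end NelsonOppen

universe u v

namespace NOAux

open FirstOrder.Language Cardinal Filter NelsonOppen

variable {L : FirstOrder.Language.{u, v}}

/-- Realization of a formula only depends on the free variables. -/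
theorem realize_congr_vars {M : Type*} [L.Structure M] (φ : L.Formula ℕ)
    {v v' : ℕ → M} (h : ∀ x ∈ φ.freeVarFinset, v x = v' x) :
    φ.Realize v ↔ φ.Realize v' := by
  have h1 := BoundedFormula.realize_restrictFreeVar' (M := M)
      (φ := φ) (s := ↑φ.freeVarFinset) subset_rfl (v := v) (xs := default)
  have h2 := BoundedFormula.realize_restrictFreeVar' (M := M)
      (φ := φ) (s := ↑φ.freeVarFinset) subset_rfl (v := v') (xs := default)
  have hvv : (v ∘ (↑) : (↑φ.freeVarFinset : Set ℕ) → M) = v' ∘ (↑) := by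
    funext x
    exact h x x.2
  rw [Formula.Realize, Formula.Realize, ← h1, ← h2, hvv]

noncomputable def conj (l : List (L.Formula ℕ)) : L.Formula ℕ := l.foldr (· ⊓ ·) ⊤

theorem conj_isQF {l : List (L.Formula ℕ)} (h : ∀ φ ∈ l, φ.IsQF) : (conj l).IsQF := by
  induction l with
  | nil => exact BoundedFormula.IsQF.top
  | cons a l ih =>
      exact (h a (by simp)).inf (ih fun φ hφ => h φ (by simp [hφ]))

theorem conj_realize {M : Type*} [L.Structure M] {l : List (L.Formula ℕ)} {v : ℕ → M} :
    (conj l).Realize v ↔ ∀ φ ∈ l, φ.Realize v := by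
  induction l with
  | nil => simp [conj]
  | cons a l ih =>
      simp only [conj, List.foldr] at *
      rw [Formula.realize_inf, ih]
      simp

noncomputable def lit (L : FirstOrder.Language.{u, v}) (E : ℕ → ℕ → Prop) (p : ℕ × ℕ) :
    L.Formula ℕ :=
  letI := Classical.dec (E p.1 p.2)
  if E p.1 p.2 then Term.equal (L := L) (.var p.1) (.var p.2)
  else (Term.equal (L := L) (.var p.1) (.var p.2)).not

theorem lit_isQF (E : ℕ → ℕ → Prop) (p : ℕ × ℕ) : (lit L E p).IsQF := by
  unfold lit
  by_cases hE : E p.1 p.2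
  · rw [if_pos hE]
    exact (BoundedFormula.IsAtomic.equal _ _).isQF
  · rw [if_neg hE]
    exact (BoundedFormula.IsAtomic.equal _ _).isQF.not

theorem lit_realize_of_arr {M : Type*} [L.Structure M] {s : Finset ℕ} {E : ℕ → ℕ → Prop}
    {v : ℕ → M} (h : ∀ φ ∈ arrangement L (↑s) E, φ.Realize v) :
    ∀ p ∈ s ×ˢ s, (lit L E p).Realize v := by
  intro p hp
  rw [Finset.mem_product] at hp
  unfold lit
  by_cases hE : E p.1 p.2
  · rw [if_pos hE]
    exact h _ ⟨p.1, hp.1, p.2, hp.2, Or.inl ⟨hE, rfl⟩⟩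
  · rw [if_neg hE]
    exact h _ ⟨p.1, hp.1, p.2, hp.2, Or.inr ⟨hE, rfl⟩⟩

theorem arr_realize_of_lit {M : Type*} [L.Structure M] {s : Finset ℕ} {E : ℕ → ℕ → Prop}
    {v : ℕ → M} (h : ∀ p ∈ s ×ˢ s, (lit L E p).Realize v) :
    ∀ φ ∈ arrangement L (↑s) E, φ.Realize v := by
  rintro φ ⟨x, hx, y, hy, (⟨hE, rfl⟩ | ⟨hE, rfl⟩)⟩
  · have := h (x, y) (Finset.mem_product.2 ⟨hx, hy⟩)
    unfold lit at this
    rwa [if_pos hE] at this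
  · have := h (x, y) (Finset.mem_product.2 ⟨hx, hy⟩)
    unfold lit at this
    rwa [if_neg hE] at this

theorem realize_lit_iff {M : Type*} [L.Structure M] {E : ℕ → ℕ → Prop} {v : ℕ → M}
    (p : ℕ × ℕ) (hlit : (lit L E p).Realize v) :
    (E p.1 p.2 → v p.1 = v p.2) ∧ (¬ E p.1 p.2 → v p.1 ≠ v p.2) := by
  unfold lit at hlit
  constructor
  · intro hE
    rw [if_pos hE, Formula.realize_equal] at hlit
    simpa using hlit
  · intro hE
    rw [if_neg hE, Formula.realize_not, Formula.realize_equal] at hlit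
    simpa using hlit

theorem exists_ultrapower {T : L.Theory} (M : Type) [S : L.Structure M]
    [Infinite M] (hT : ∀ ψ ∈ T, M ⊨ ψ) (v : ℕ → M) (X : Type) [Infinite X]
    (hMX : #M ≤ #X) :
    ∃ (N : Type) (SN : L.Structure N) (w : ℕ → N),
      Cardinal.mk N = 2 ^ #X ∧ (∀ ψ ∈ T, @Sentence.Realize L N SN ψ) ∧
      (∀ φ : L.Formula ℕ, @Formula.Realize L N SN ℕ φ w ↔ φ.Realize v) := by
  classical
  set I := Finset X with hI
  set F : Filter I := ⨅ t : Finset X, 𝓟 {s : I | t ⊆ s} with hF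
  have hdir : Directed (· ≥ ·) fun t : Finset X => (𝓟 {s : I | t ⊆ s} : Filter I) := by
    intro t₁ t₂
    refine ⟨t₁ ∪ t₂, ?_, ?_⟩ <;>
      exact Filter.principal_mono.2 fun s hs =>
        Finset.Subset.trans (by simp) hs
  haveI : F.NeBot :=
    Filter.iInf_neBot_of_directed hdir fun t =>
      Filter.principal_neBot_iff.2 ⟨t, by simp⟩
  set U : Ultrafilter I := Ultrafilter.of F with hUdef
  have hU : ∀ t : Finset X, {s : I | t ⊆ s} ∈ U := fun t =>
    Ultrafilter.of_le F (Filter.mem_iInf_of_mem t (Filter.mem_principal_self _))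
  set Mc : I → Type := fun _ => M with hMc
  letI : ∀ i, L.Structure (Mc i) := fun _ => S
  haveI : ∀ i, Nonempty (Mc i) := fun _ => inferInstance
  set N : Type := (↑U : Filter I).Product Mc with hN
  letI SN : L.Structure N := inferInstance
  set w : ℕ → N := fun n => (↑(fun _ : I => v n) : N) with hw
  have hup : #N ≤ 2 ^ #X := by
    have h1 : #N ≤ #(I → M) := by
      refine Cardinal.mk_le_of_surjective (f := fun f : I → M => (↑f : N)) ?_
      exact fun q => Quotient.inductionOn' q fun f => ⟨f, rfl⟩
    have h2 : #(I → M) = #M ^ #I := (Cardinal.power_def M I).symm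
    have h3 : (#I : Cardinal) = #X := Cardinal.mk_finset_of_infinite X
    have h4 : #M ^ #X ≤ (2 ^ #X) ^ #X :=
      Cardinal.power_le_power_right (hMX.trans (Cardinal.cantor #X).le)
    have h5 : ((2 : Cardinal) ^ #X) ^ #X = 2 ^ #X := by
      rw [← Cardinal.power_mul, Cardinal.mul_eq_self (Cardinal.aleph0_le_mk X)]
    calc #N ≤ #(I → M) := h1
      _ = #M ^ #I := h2
      _ = #M ^ #X := by rw [h3]
      _ ≤ (2 ^ #X) ^ #X := h4
      _ = 2 ^ #X := h5
  have hg : ∀ s : I, ∃ g : (↥(s : Finset X) → Bool) → M, Function.Injective g := by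
    intro s
    refine ⟨fun f => Infinite.natEmbedding M ((Fintype.equivFin _ f : Fin _) : ℕ), ?_⟩
    intro a b hab
    have := (Infinite.natEmbedding M).injective hab
    exact (Fintype.equivFin _).injective (Fin.val_injective this)
  choose g hginj using hg
  have hlow : 2 ^ #X ≤ #N := by
    rw [← Cardinal.mk_set]
    refine Cardinal.mk_le_of_injective
      (f := fun A : Set X =>
        (↑(fun s : I => g s fun x : ↥(s : Finset X) => decide ((x : X) ∈ A)) : N)) ?_
    intro A B hAB
    by_contra hne
    obtain ⟨x, hx⟩ := not_forall.1 (fun hall => hne (Set.ext fun y => (hall y)))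
    have hev : ∀ᶠ s in (↑U : Filter I),
        (g s fun y : ↥(s : Finset X) => decide ((y : X) ∈ A)) =
        (g s fun y : ↥(s : Finset X) => decide ((y : X) ∈ B)) := Quotient.exact' hAB
    have hev2 : ∀ᶠ s in (↑U : Filter I), ({x} : Finset X) ⊆ s := hU {x}
    obtain ⟨s, h1, h2⟩ := (hev.and hev2).exists
    have hxs : x ∈ s := Finset.singleton_subset_iff.1 h2
    have := congrFun (hginj s h1) ⟨x, hxs⟩
    exact hx (by simpa using this)
  refine ⟨N, SN, w, le_antisymm hup hlow, ?_, ?_⟩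
  · intro ψ hψ
    exact (Ultraproduct.sentence_realize (M := Mc) (u := U) ψ).2
      (Filter.Eventually.of_forall fun _ => hT ψ hψ)
  · intro φ
    have h := Ultraproduct.realize_formula_cast (M := Mc) (u := U) φ (fun n _ => v n)
    refine h.trans ?_
    refine ⟨fun hh => ?_, fun hh => Filter.Eventually.of_forall fun _ => hh⟩
    obtain ⟨a, ha⟩ := hh.exists
    exact ha

theorem exists_equiv_extend {N₁ N₂ : Type} [Infinite N₁] (hcard : #N₁ = #N₂)
    (V : Set ℕ) (hVfin : V.Finite) (w₁ : ℕ → N₁) (w₂ : ℕ → N₂)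
    (h : ∀ x ∈ V, ∀ y ∈ V, (w₁ x = w₁ y ↔ w₂ x = w₂ y)) :
    ∃ e : N₁ ≃ N₂, ∀ x ∈ V, e (w₁ x) = w₂ x := by
  classical
  haveI : Infinite N₂ := by
    rw [Cardinal.infinite_iff] at *
    rwa [← hcard]
  set A : Set N₁ := w₁ '' V with hA
  set B : Set N₂ := w₂ '' V with hB
  have hmemA : ∀ x ∈ V, w₁ x ∈ A := fun x hx => Set.mem_image_of_mem w₁ hx
  have hmemB : ∀ x ∈ V, w₂ x ∈ B := fun x hx => Set.mem_image_of_mem w₂ hx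
  have hsel : ∀ a : A, ∃ x, x ∈ V ∧ w₁ x = (a : N₁) := fun a => by
    obtain ⟨x, hx, hh⟩ := a.2
    exact ⟨x, hx, hh⟩
  choose sel hselV hselw using hsel
  set F : A → B := fun a => ⟨w₂ (sel a), hmemB _ (hselV a)⟩ with hFdef
  have hkey : ∀ (x : ℕ) (hx : x ∈ V), (F ⟨w₁ x, hmemA x hx⟩ : N₂) = w₂ x := by
    intro x hx
    have h1 : w₁ (sel ⟨w₁ x, hmemA x hx⟩) = w₁ x := hselw _
    exact (h _ (hselV _) x hx).1 h1
  have hFbij : Function.Bijective F := by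
    constructor
    · intro a b hab
      have h2 : w₂ (sel a) = w₂ (sel b) := by
        simpa [hFdef] using hab
      have h3 : w₁ (sel a) = w₁ (sel b) := (h _ (hselV a) _ (hselV b)).2 h2
      have := (hselw a).symm.trans (h3.trans (hselw b))
      exact Subtype.ext this
    · rintro ⟨b, y, hy, rfl⟩
      exact ⟨⟨w₁ y, hmemA y hy⟩, Subtype.ext (hkey y hy)⟩
  set F' : A ≃ B := Equiv.ofBijective F hFbij with hF'
  have hAfin : A.Finite := hVfin.image w₁
  have hBfin : B.Finite := hVfin.image w₂
  have hAc : #(↥Aᶜ) = #N₁ :=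
    Cardinal.mk_compl_of_infinite A (hAfin.lt_aleph0.trans_le (Cardinal.aleph0_le_mk N₁))
  have hBc : #(↥Bᶜ) = #N₂ :=
    Cardinal.mk_compl_of_infinite B (hBfin.lt_aleph0.trans_le (Cardinal.aleph0_le_mk N₂))
  have : #(↥Aᶜ) = #(↥Bᶜ) := by rw [hAc, hBc, hcard]
  obtain ⟨G⟩ := Cardinal.eq.1 this
  refine ⟨(Equiv.Set.sumCompl A).symm.trans ((F'.sumCongr G).trans (Equiv.Set.sumCompl B)), ?_⟩
  intro x hx
  simp only [Equiv.trans_apply]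
  rw [Equiv.Set.sumCompl_symm_apply_of_mem (hmemA x hx)]
  simp only [Equiv.sumCongr_apply, Sum.map_inl, Equiv.Set.sumCompl_apply_inl]
  exact hkey x hx

end NOAux

open NOAux Cardinal

open NelsonOppen in
/-- (Nelson-Oppen with propositional structure.)  Let `T₁`,
`T₂` be stably-infinite theories over disjoint signatures (modeled by the sum
language `L₁.sum L₂`, whose two copies of symbols are disjoint by
construction), and let `Φᵢ` be a quantifier-free `Σᵢ`-formula.  Then
`Φ₁ ∧ Φ₂` is `(T₁ ∪ T₂)`-satisfiable iff there is an equivalence relation `E`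
on the set `V` of variables shared by `Φ₁` and `Φ₂` such that
`{Φᵢ} ∪ α(V,E)` is `Tᵢ`-satisfiable for `i = 1, 2`. -/
theorem nelson_oppen_with_propositional_structure
    (L₁ L₂ : Language) (T₁ : L₁.Theory) (T₂ : L₂.Theory)
    (h₁ : StablyInfinite L₁ T₁) (h₂ : StablyInfinite L₂ T₂)
    (Φ₁ : L₁.Formula ℕ) (Φ₂ : L₂.Formula ℕ)
    (hq₁ : Φ₁.IsQF) (hq₂ : Φ₂.IsQF)
    (V : Set ℕ)
    (hV : V = ↑Φ₁.freeVarFinset ∩ ↑Φ₂.freeVarFinset) :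
    TSat (L₁.sum L₂)
        (Language.LHom.sumInl.onTheory T₁ ∪ Language.LHom.sumInr.onTheory T₂)
        {Language.LHom.sumInl.onFormula Φ₁, Language.LHom.sumInr.onFormula Φ₂} ↔
      ∃ E : ℕ → ℕ → Prop, IsEquivOn V E ∧
        TSat L₁ T₁ ({Φ₁} ∪ arrangement L₁ V E) ∧
        TSat L₂ T₂ ({Φ₂} ∪ arrangement L₂ V E) := by
  classical
  constructor
  · -- forward direction
    rintro ⟨M, S, v, hT, hΦ⟩
    refine ⟨fun x y => v x = v y,
      ⟨fun _ _ => rfl, fun _ _ _ _ h => h.symm, fun _ _ _ _ _ _ h1 h2 => h1.trans h2⟩, ?_, ?_⟩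
    · letI := S
      letI S₁ : L₁.Structure M := (Language.LHom.sumInl : L₁ →ᴸ L₁.sum L₂).reduct M
      haveI hexp1 : (Language.LHom.sumInl : L₁ →ᴸ L₁.sum L₂).IsExpansionOn M :=
        Language.LHom.isExpansionOn_reduct (Language.LHom.sumInl : L₁ →ᴸ L₁.sum L₂) M
      refine ⟨M, S₁, v, ?_, ?_⟩
      · intro ψ hψ
        have := hT (Language.LHom.sumInl.onSentence ψ) (Set.mem_union_left _ ⟨ψ, hψ, rfl⟩)
        exact (Language.LHom.realize_onSentence M
          (Language.LHom.sumInl : L₁ →ᴸ L₁.sum L₂) ψ).1 this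
      · rintro φ (rfl | ⟨x, hx, y, hy, (⟨hE, rfl⟩ | ⟨hE, rfl⟩)⟩)
        · have := hΦ _ (Set.mem_insert _ _)
          exact (Language.LHom.realize_onFormula _ _).1 this
        · simp only [Language.Formula.realize_equal, Language.Term.realize_var]
          exact hE
        · simp only [Language.Formula.realize_not, Language.Formula.realize_equal,
            Language.Term.realize_var]
          exact hE
    · letI := S
      letI S₂ : L₂.Structure M := (Language.LHom.sumInr : L₂ →ᴸ L₁.sum L₂).reduct M
      haveI hexp2 : (Language.LHom.sumInr : L₂ →ᴸ L₁.sum L₂).IsExpansionOn M :=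
        Language.LHom.isExpansionOn_reduct (Language.LHom.sumInr : L₂ →ᴸ L₁.sum L₂) M
      refine ⟨M, S₂, v, ?_, ?_⟩
      · intro ψ hψ
        have := hT (Language.LHom.sumInr.onSentence ψ) (Set.mem_union_right _ ⟨ψ, hψ, rfl⟩)
        exact (Language.LHom.realize_onSentence M
          (Language.LHom.sumInr : L₂ →ᴸ L₁.sum L₂) ψ).1 this
      · rintro φ (rfl | ⟨x, hx, y, hy, (⟨hE, rfl⟩ | ⟨hE, rfl⟩)⟩)
        · have := hΦ _ (Set.mem_insert_of_mem _ rfl)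
          exact (Language.LHom.realize_onFormula _ _).1 this
        · simp only [Language.Formula.realize_equal, Language.Term.realize_var]
          exact hE
        · simp only [Language.Formula.realize_not, Language.Formula.realize_equal,
            Language.Term.realize_var]
          exact hE
  · -- backward direction
    rintro ⟨E, _hE, hS1, hS2⟩
    set s : Finset ℕ := Φ₁.freeVarFinset ∩ Φ₂.freeVarFinset with hs
    have hVs : V = ↑s := by rw [hV, hs, Finset.coe_inter]
    -- package each side into a single quantifier-free formula
    set ψ₁ : L₁.Formula ℕ := Φ₁ ⊓ conj ((s ×ˢ s).toList.map (lit L₁ E)) with hψ₁def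
    set ψ₂ : L₂.Formula ℕ := Φ₂ ⊓ conj ((s ×ˢ s).toList.map (lit L₂ E)) with hψ₂def
    have hψ₁QF : ψ₁.IsQF := hq₁.inf (conj_isQF (by
      rintro φ hφ
      rw [List.mem_map] at hφ
      obtain ⟨p, _, rfl⟩ := hφ
      exact lit_isQF E p))
    have hψ₂QF : ψ₂.IsQF := hq₂.inf (conj_isQF (by
      rintro φ hφ
      rw [List.mem_map] at hφ
      obtain ⟨p, _, rfl⟩ := hφ
      exact lit_isQF E p))
    -- get infinite models
    obtain ⟨M, S, v, hT, hΓ⟩ := hS1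
    have hsat₁ : TSat L₁ T₁ {ψ₁} := by
      refine ⟨M, S, v, hT, ?_⟩
      rintro φ rfl
      rw [hψ₁def, Language.Formula.realize_inf]
      refine ⟨hΓ Φ₁ (Set.mem_union_left _ rfl), conj_realize.2 ?_⟩
      intro φ hφ
      rw [List.mem_map] at hφ
      obtain ⟨p, hp, rfl⟩ := hφ
      exact lit_realize_of_arr
        (fun φ hφ => hΓ φ (Set.mem_union_right _ (by rwa [← hVs] at hφ)))
        p (Finset.mem_toList.1 hp)
    obtain ⟨M', S', v', hT', hΓ'⟩ := hS2
    have hsat₂ : TSat L₂ T₂ {ψ₂} := by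
      refine ⟨M', S', v', hT', ?_⟩
      rintro φ rfl
      rw [hψ₂def, Language.Formula.realize_inf]
      refine ⟨hΓ' Φ₂ (Set.mem_union_left _ rfl), conj_realize.2 ?_⟩
      intro φ hφ
      rw [List.mem_map] at hφ
      obtain ⟨p, hp, rfl⟩ := hφ
      exact lit_realize_of_arr
        (fun φ hφ => hΓ' φ (Set.mem_union_right _ (by rwa [← hVs] at hφ)))
        p (Finset.mem_toList.1 hp)
    obtain ⟨M₁, S₁, v₁, hInf₁, hT₁, hr₁⟩ := h₁ ψ₁ hψ₁QF hsat₁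
    obtain ⟨M₂, S₂, v₂, hInf₂, hT₂, hr₂⟩ := h₂ ψ₂ hψ₂QF hsat₂
    haveI := hInf₁
    haveI := hInf₂
    rw [hψ₁def, Language.Formula.realize_inf] at hr₁
    rw [hψ₂def, Language.Formula.realize_inf] at hr₂
    obtain ⟨hΦ₁r, hc₁⟩ := hr₁
    obtain ⟨hΦ₂r, hc₂⟩ := hr₂
    rw [conj_realize] at hc₁ hc₂
    have hlits₁ : ∀ p ∈ s ×ˢ s, (lit L₁ E p).Realize v₁ := fun p hp =>
      hc₁ _ (List.mem_map_of_mem (Finset.mem_toList.2 hp))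
    have hlits₂ : ∀ p ∈ s ×ˢ s, (lit L₂ E p).Realize v₂ := fun p hp =>
      hc₂ _ (List.mem_map_of_mem (Finset.mem_toList.2 hp))
    -- ultrapowers of equal cardinality
    set X : Type := M₁ ⊕ M₂ with hX
    haveI : Infinite X := Sum.infinite_of_left
    have hM₁X : #M₁ ≤ #X := Cardinal.mk_le_of_injective (Sum.inl_injective)
    have hM₂X : #M₂ ≤ #X := Cardinal.mk_le_of_injective (Sum.inr_injective)
    obtain ⟨N₁, SN₁, w₁, hcard₁, hTN₁, htr₁⟩ := exists_ultrapower M₁ hT₁ v₁ X hM₁X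
    obtain ⟨N₂, SN₂, w₂, hcard₂, hTN₂, htr₂⟩ := exists_ultrapower M₂ hT₂ v₂ X hM₂X
    haveI hInfN₁ : Infinite N₁ := by
      rw [Cardinal.infinite_iff, hcard₁]
      exact (Cardinal.aleph0_le_mk X).trans (Cardinal.cantor #X).le
    have hΦ₁w : @Language.Formula.Realize L₁ N₁ SN₁ ℕ Φ₁ w₁ := (htr₁ Φ₁).2 hΦ₁r
    have hΦ₂w : @Language.Formula.Realize L₂ N₂ SN₂ ℕ Φ₂ w₂ := (htr₂ Φ₂).2 hΦ₂r
    have hlitsw₁ : ∀ p ∈ s ×ˢ s, @Language.Formula.Realize L₁ N₁ SN₁ ℕ (lit L₁ E p) w₁ :=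
      fun p hp => (htr₁ _).2 (hlits₁ p hp)
    have hlitsw₂ : ∀ p ∈ s ×ˢ s, @Language.Formula.Realize L₂ N₂ SN₂ ℕ (lit L₂ E p) w₂ :=
      fun p hp => (htr₂ _).2 (hlits₂ p hp)
    letI := SN₁
    letI := SN₂
    have hiff : ∀ x ∈ V, ∀ y ∈ V, (w₁ x = w₁ y ↔ w₂ x = w₂ y) := by
      intro x hx y hy
      rw [hVs, Finset.mem_coe] at hx hy
      have hp : (x, y) ∈ s ×ˢ s := Finset.mem_product.2 ⟨hx, hy⟩
      by_cases hExy : E x y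
      · exact iff_of_true ((realize_lit_iff _ (hlitsw₁ _ hp)).1 hExy)
          ((realize_lit_iff _ (hlitsw₂ _ hp)).1 hExy)
      · exact iff_of_false ((realize_lit_iff _ (hlitsw₁ _ hp)).2 hExy)
          ((realize_lit_iff _ (hlitsw₂ _ hp)).2 hExy)
    have hVfin : V.Finite := hVs ▸ s.finite_toSet
    obtain ⟨e, he⟩ := exists_equiv_extend (hcard₁.trans hcard₂.symm) V hVfin w₁ w₂ hiff
    -- build the combined structure on N₁
    letI SB : L₂.Structure N₁ := Equiv.inducedStructure (e.symm)
    letI Ssum : (L₁.sum L₂).Structure N₁ := Language.sumStructure _ _ _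
    set g : @Language.Equiv L₂ N₂ N₁ SN₂ SB := Equiv.inducedStructureEquiv e.symm with hg
    set vv : ℕ → N₁ := fun x => if x ∈ Φ₁.freeVarFinset then w₁ x else e.symm (w₂ x) with hvv
    refine ⟨N₁, Ssum, vv, ?_, ?_⟩
    · rintro ψ (⟨ψ₀, hψ₀, rfl⟩ | ⟨ψ₀, hψ₀, rfl⟩)
      · rw [Language.LHom.realize_onSentence]
        exact hTN₁ ψ₀ hψ₀
      · rw [Language.LHom.realize_onSentence]
        exact (Language.StrongHomClass.realize_sentence g ψ₀).1 (hTN₂ ψ₀ hψ₀)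
    · rintro φ (rfl | rfl)
      · rw [Language.LHom.realize_onFormula]
        refine (realize_congr_vars Φ₁ (fun x hx => ?_)).2 hΦ₁w
        simp only [hvv]
        simp [hx]
      · rw [Language.LHom.realize_onFormula]
        have hg2 : @Language.Formula.Realize L₂ N₁ SB ℕ Φ₂ ((e.symm : N₂ → N₁) ∘ w₂) :=
          (Language.StrongHomClass.realize_formula g Φ₂ (v := w₂)).2 hΦ₂w
        refine (realize_congr_vars Φ₂ (fun x hx => ?_)).2 hg2
        simp only [hvv]
        by_cases hx1 : x ∈ Φ₁.freeVarFinset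
        · rw [if_pos hx1]
          have hxV : x ∈ V := by
            rw [hVs, Finset.mem_coe, hs, Finset.mem_inter]
            exact ⟨hx1, hx⟩
          have := he x hxV
          simp only [Function.comp_apply]
          rw [← this, Equiv.symm_apply_apply]
        · rw [if_neg hx1]
          rfl
end

section
/- Soundness of membership bounds propagation: suppose integer assignment v satisfies the membership constraint (x1,...,xk) ∈ {y_1,...,y_l} (where y_j = (y_{j,1},...,y_{j,k})) and satisfies lb(z) ≤ v(z) ≤ ub(z) for every variable z. Then for each i, v(x_i) ≥ max(lb(x_i), min{lb(y_{j,i}) : j ∈ [1,l], match(x, y_j)}) and v(x_i) ≤ min(ub(x_i), max{ub(y_{j,i}) : j ∈ [1,l], match(x, y_j)}). -/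
namespace MemProp

/-- `lb z ≤ v z ≤ ub z` for every variable `z` (bounds live in ℤ ∪ {±∞},
modeled as `EReal`). -/
def RespectsBounds (lb ub : ℕ → EReal) (v : ℕ → ℤ) : Prop :=
  ∀ z : ℕ, lb z ≤ ((v z : ℝ) : EReal) ∧ ((v z : ℝ) : EReal) ≤ ub z

/-- every bound is an integer or ±∞ -/
def IntBounds (f : ℕ → EReal) : Prop :=
  ∀ z : ℕ, f z = ⊥ ∨ f z = ⊤ ∨ ∃ n : ℤ, f z = ((n : ℝ) : EReal)

/-- `Match lb ub x y` : for each column `i`, the intervals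
`[lb(x i), ub(x i)]` and `[lb(y i), ub(y i)]` intersect. -/
def Match {k : ℕ} (lb ub : ℕ → EReal) (x y : Fin k → ℕ) : Prop :=
  ∀ i : Fin k, max (lb (x i)) (lb (y i)) ≤ min (ub (x i)) (ub (y i))

/-- the membership constraint `(x₁,...,x_k) ∈ {y₁,...,y_l}` holds under `v` -/
def MemHolds {k l : ℕ} (x : Fin k → ℕ) (y : Fin l → Fin k → ℕ) (v : ℕ → ℤ) : Prop :=
  ∃ j : Fin l, ∀ i : Fin k, v (x i) = v (y j i)

end MemProp

/-- Soundness of membership bounds propagation: if the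
integer assignment `v` satisfies the membership constraint
`(x₁,...,x_k) ∈ {y₁,...,y_l}` and respects the bounds `lb`, `ub`
(valued in ℤ ∪ {±∞}), then for each `i`,
`v (x i) ≥ max (lb (x i)) (min {lb (y j i) : match(x, y j)})` and
`v (x i) ≤ min (ub (x i)) (max {ub (y j i) : match(x, y j)})`. -/
theorem membership_bounds_propagation_sound
    (k l : ℕ) (x : Fin k → ℕ) (y : Fin l → Fin k → ℕ)
    (lb ub : ℕ → EReal) (hlb : MemProp.IntBounds lb) (hub : MemProp.IntBounds ub)
    (v : ℕ → ℤ) (hv : MemProp.RespectsBounds lb ub v)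
    (hmem : MemProp.MemHolds x y v) :
    ∀ i : Fin k,
      max (lb (x i))
          (sInf {e : EReal | ∃ j : Fin l, MemProp.Match lb ub x (y j) ∧ e = lb (y j i)})
        ≤ ((v (x i) : ℝ) : EReal) ∧
      ((v (x i) : ℝ) : EReal) ≤
        min (ub (x i))
          (sSup {e : EReal | ∃ j : Fin l, MemProp.Match lb ub x (y j) ∧ e = ub (y j i)}) := by
  obtain ⟨j, hj⟩ := hmem
  have hmatch : MemProp.Match lb ub x (y j) := by
    intro i
    have h1 := hv (x i)
    have h2 := hv (y j i)
    rw [← hj i] at h2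
    exact le_trans (max_le h1.1 h2.1) (le_min h1.2 h2.2)
  intro i
  have h1 := hv (x i)
  have h2 := hv (y j i)
  rw [← hj i] at h2
  constructor
  · refine max_le h1.1 (le_trans ?_ h2.1)
    exact sInf_le ⟨j, hmatch, rfl⟩
  · refine le_min h1.2 (le_trans h2.2 ?_)
    exact le_sSup ⟨j, hmatch, rfl⟩
end

section
/- If exactly one index j ∈ [1,l] satisfies match(x, y_j) under given bounds lb, ub, then every integer assignment v respecting the bounds and satisfying the membership constraint (x1,...,xk) ∈ {y_1,...,y_l} must satisfy v(x_i) = v(y_{j,i}) for all i ∈ [1,k]. If no index j satisfies match(x, y_j), then no assignment respecting the bounds satisfies the membership constraint. -/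
/-- If exactly one index `j` satisfies `match(x, y j)` under
the given bounds, then every integer assignment respecting the bounds and
satisfying the membership constraint `(x₁,...,x_k) ∈ {y₁,...,y_l}` must set
`v (x i) = v (y j i)` for all `i`; and if no index matches, no assignment
respecting the bounds satisfies the membership constraint. -/
theorem membership_match_unique_or_empty
    (k l : ℕ) (x : Fin k → ℕ) (y : Fin l → Fin k → ℕ) (lb ub : ℕ → EReal) :
    (∀ j : Fin l, MemProp.Match lb ub x (y j) →
        (∀ j' : Fin l, MemProp.Match lb ub x (y j') → j' = j) →
        ∀ v : ℕ → ℤ, MemProp.RespectsBounds lb ub v → MemProp.MemHolds x y v →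
          ∀ i : Fin k, v (x i) = v (y j i)) ∧
    ((∀ j : Fin l, ¬ MemProp.Match lb ub x (y j)) →
        ∀ v : ℕ → ℤ, MemProp.RespectsBounds lb ub v → ¬ MemProp.MemHolds x y v) := by
  have key : ∀ (j : Fin l) (v : ℕ → ℤ), MemProp.RespectsBounds lb ub v →
      (∀ i : Fin k, v (x i) = v (y j i)) → MemProp.Match lb ub x (y j) := by
    intro j v hv heq i
    refine le_trans (max_le (hv (x i)).1 ?_) (le_min (hv (x i)).2 ?_)
    · rw [heq i]; exact (hv (y j i)).1
    · rw [heq i]; exact (hv (y j i)).2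
  constructor
  · intro j _ huniq v hv ⟨j', hj'⟩ i
    have := huniq j' (key j' v hv hj')
    rw [this] at hj'
    exact hj' i
  · intro hnone v hv ⟨j, hj⟩
    exact hnone j (key j v hv hj)
end
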